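/- Let A be an R-algebra with involution * and *-invariant trace tr, with tr(1) = δ₀. Define Tr on A ≀ 𝔖_n by: for a simple tensor a = a₁⊗⋯⊗a_n and π ∈ 𝔖_n, Tr(π a) = Π_o o(a), where the product is over orbits o = (i, π(i), ..., π^k(i)) of π on {1,...,n} and o(a) = tr(a_{π^k(i)} ⋯ a_{π(i)} a_i). Then Tr is a *-invariant trace on A ≀ 𝔖_n (i.e., Tr(xy) = Tr(yx) and Tr(x*) = Tr(x)) with Tr(1) = δ₀ⁿ. -/

import Mathlib

open scoped TensorProduct Classical

/-- The ordered product of labels along (part of) a cycle of `π`: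
`cycProd π a i m = a (π^m i) * ⋯ * a (π i) * a i`. -/
def cycProd {n : ℕ} {A : Type*} [Ring A] (π : Equiv.Perm (Fin n)) (a : Fin n → A)
    (i : Fin n) : ℕ → A
  | 0 => a i
  | m + 1 => a ((π ^ (m + 1)) i) * cycProd π a i m

section AuxStmt17
variable {n : ℕ} {A : Type*} [Ring A]

lemma perm_inv_apply_self' {α : Type*} (f : Equiv.Perm α) (x : α) : f⁻¹ (f x) = x :=
  f.symm_apply_apply x

lemma perm_apply_inv_self' {α : Type*} (f : Equiv.Perm α) (x : α) : f (f⁻¹ x) = x :=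
  f.apply_symm_apply x

lemma cycProd_shift (π : Equiv.Perm (Fin n)) (a : Fin n → A) (i : Fin n) (m : ℕ) :
    cycProd π a (π i) m = cycProd π (fun j => a (π j)) i m := by
  induction m with
  | zero => rfl
  | succ m ih =>
      show a ((π ^ (m+1)) (π i)) * cycProd π a (π i) m = _
      rw [ih]
      show _ = a (π ((π ^ (m+1)) i)) * _
      congr 2
      rw [← Equiv.Perm.mul_apply, ← Equiv.Perm.mul_apply, pow_mul_comm']

lemma cycProd_succ (π : Equiv.Perm (Fin n)) (a : Fin n → A) (i : Fin n) (m : ℕ) :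
    cycProd π a i (m + 1) = cycProd π (fun j => a (π j)) i m * a i := by
  induction m with
  | zero =>
      show a ((π ^ 1) i) * a i = a (π i) * a i
      rw [pow_one]
  | succ m ih =>
      show a ((π ^ (m+2)) i) * cycProd π a i (m+1) = _
      rw [ih]
      show _ = a (π ((π ^ (m+1)) i)) * cycProd π (fun j => a (π j)) i m * a i
      rw [← mul_assoc]
      congr 2
      rw [← Equiv.Perm.mul_apply, ← pow_succ']

/-- Reverse product along the inverse cycle. -/
def rProd (π : Equiv.Perm (Fin n)) (a : Fin n → A) (i : Fin n) : ℕ → A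
  | 0 => a i
  | m + 1 => rProd π a i m * a ((π ^ (m + 1)) i)

lemma rProd_inv_eq (π : Equiv.Perm (Fin n)) (a : Fin n → A) (i : Fin n) (m : ℕ) :
    rProd π⁻¹ a ((π ^ (m + 1)) i) m = cycProd π (fun j => a (π j)) i m := by
  induction m generalizing i with
  | zero =>
      show a ((π ^ 1) i) = a (π i)
      rw [pow_one]
  | succ m ih =>
      show rProd π⁻¹ a ((π ^ (m+2)) i) m * a ((π⁻¹ ^ (m+1)) ((π ^ (m+2)) i)) = _
      have h1 : (π ^ (m+2)) i = (π ^ (m+1)) (π i) := by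
        rw [← Equiv.Perm.mul_apply, ← pow_succ]
      have h2 : (π⁻¹ ^ (m+1)) ((π ^ (m+2)) i) = π i := by
        rw [← Equiv.Perm.mul_apply, inv_pow]
        have : (π ^ (m+1))⁻¹ * π ^ (m+2) = π := by group
        rw [this]
      rw [h2, h1, ih (π i), cycProd_shift]
      simp only [cycProd_succ]

lemma cycleOf_inst_irrel {α : Type*} (f : Equiv.Perm α) (x : α)
    (i1 i2 : DecidableRel f.SameCycle) :
    @Equiv.Perm.cycleOf α f i1 x = @Equiv.Perm.cycleOf α f i2 x := by
  congr!

lemma card_support_cycleOf_inv {α : Type*} [Fintype α] [DecidableEq α]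
    (p : Equiv.Perm α) (x : α) (inst : DecidableRel p⁻¹.SameCycle) :
    (@Equiv.Perm.cycleOf α p⁻¹ inst x).support.card = (p.cycleOf x).support.card := by
  have h1 : @Equiv.Perm.cycleOf α p⁻¹ inst x = (p.cycleOf x)⁻¹ := by
    rw [Equiv.Perm.cycleOf_inv]
    exact cycleOf_inst_irrel p⁻¹ x inst _
  rw [h1, Equiv.Perm.support_inv]

/-- `(π ^ (card (cycleOf i).support - 1 + 1)) i = i`. -/
lemma key_pow (π : Equiv.Perm (Fin n)) (i : Fin n) :
    (π ^ ((π.cycleOf i).support.card - 1 + 1)) i = i := by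
  rcases h : (π.cycleOf i).support.card with _ | k
  · have hfix : π i = i := by
      by_contra hne
      have := Finset.card_pos.mpr (Equiv.Perm.support_cycleOf_nonempty (f := π) (x := i) |>.mpr hne)
      omega
    simpa using hfix
  · have h' : k + 1 - 1 + 1 = k + 1 := rfl
    rw [h', ← h]
    have := Equiv.Perm.pow_mod_card_support_cycleOf_self_apply π
      ((π.cycleOf i).support.card) i
    rw [Nat.mod_self, pow_zero, Equiv.Perm.one_apply] at this
    exact this.symm

lemma cycleOf_conj' (τ σ : Equiv.Perm (Fin n)) (x : Fin n) :
    (σ * τ * σ⁻¹).cycleOf (σ x) = σ * τ.cycleOf x * σ⁻¹ := by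
  ext y
  have hsc : (σ * τ * σ⁻¹).SameCycle (σ x) y ↔ τ.SameCycle x (σ⁻¹ y) := by
    constructor
    · rintro ⟨k, hk⟩
      refine ⟨k, ?_⟩
      rw [conj_zpow] at hk
      simp only [Equiv.Perm.mul_apply, perm_inv_apply_self'] at hk
      rw [← hk]
      simp
    · rintro ⟨k, hk⟩
      refine ⟨k, ?_⟩
      rw [conj_zpow]
      simp only [Equiv.Perm.mul_apply, perm_inv_apply_self']
      rw [hk]
      simp
  rw [Equiv.Perm.cycleOf_apply]
  simp only [Equiv.Perm.mul_apply]
  rw [Equiv.Perm.cycleOf_apply]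
  by_cases h : τ.SameCycle x (σ⁻¹ y)
  · rw [if_pos (hsc.mpr h), if_pos h]
    try simp
  · rw [if_neg (fun hh => h (hsc.mp hh)), if_neg h]
    try simp

lemma card_cycleOf_conj (τ σ : Equiv.Perm (Fin n)) (x : Fin n) :
    ((σ * τ * σ⁻¹).cycleOf (σ x)).support.card = (τ.cycleOf x).support.card := by
  rw [cycleOf_conj', Equiv.Perm.card_support_conj]

lemma sameCycle_of_conj {τ ρ σ : Equiv.Perm (Fin n)} (h : ρ * σ = σ * τ) {x y : Fin n}
    (hxy : τ.SameCycle x y) : ρ.SameCycle (σ x) (σ y) := by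
  obtain ⟨k, hk⟩ := hxy
  have hρ : ρ = σ * τ * σ⁻¹ := by
    rw [← h]; group
  refine ⟨k, ?_⟩
  rw [hρ, conj_zpow]
  simp only [Equiv.Perm.mul_apply, perm_inv_apply_self']
  rw [hk]

/-- minimal representative of the cycle of `i`. -/
noncomputable def minRep (π : Equiv.Perm (Fin n)) (i : Fin n) : Fin n :=
  (Finset.univ.filter (fun x => π.SameCycle i x)).min'
    ⟨i, by simp [Equiv.Perm.SameCycle.refl]⟩

lemma minRep_sameCycle (π : Equiv.Perm (Fin n)) (i : Fin n) :
    π.SameCycle i (minRep π i) := by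
  have := (Finset.univ.filter (fun x => π.SameCycle i x)).min'_mem
    ⟨i, by simp [Equiv.Perm.SameCycle.refl]⟩
  simpa [minRep] using this

lemma minRep_le (π : Equiv.Perm (Fin n)) {i x : Fin n} (h : π.SameCycle i x) :
    minRep π i ≤ x :=
  Finset.min'_le _ _ (by simp [h])

lemma minRep_congr (π : Equiv.Perm (Fin n)) {i j : Fin n} (h : π.SameCycle i j) :
    minRep π i = minRep π j := by
  unfold minRep
  congr 1
  ext x
  simp only [Finset.mem_filter, Finset.mem_univ, true_and]
  exact ⟨fun hx => h.symm.trans hx, fun hx => h.trans hx⟩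

lemma sameCycle_nat (π : Equiv.Perm (Fin n)) {i j : Fin n} (h : π.SameCycle i j) :
    ∃ t : ℕ, (π ^ t) i = j := by
  obtain ⟨t, _, _, ht⟩ := Equiv.Perm.SameCycle.exists_pow_eq π h
  exact ⟨t, ht⟩

lemma minRep_min (π : Equiv.Perm (Fin n)) (i : Fin n) (k : ℕ) :
    minRep π i ≤ (π ^ k) (minRep π i) :=
  minRep_le π ((minRep_sameCycle π i).trans ⟨(k : ℤ), by simp⟩)

lemma minRep_eq_self (π : Equiv.Perm (Fin n)) {i : Fin n} (h : ∀ k : ℕ, i ≤ (π ^ k) i) :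
    minRep π i = i := by
  refine le_antisymm (minRep_le π (Equiv.Perm.SameCycle.refl π i)) ?_
  obtain ⟨t, ht⟩ := sameCycle_nat π (minRep_sameCycle π i)
  rw [← ht]; exact h t

/-- Interleaved product `a(τ^{m+1} i) b(σ τ^m i) ⋯ b(σ τ i) a(τ i)`. -/
def Yaux (τ σ : Equiv.Perm (Fin n)) (a b : Fin n → A) (i : Fin n) : ℕ → A
  | 0 => a (τ i)
  | m + 1 => a ((τ ^ (m + 2)) i) * (b (σ ((τ ^ (m + 1)) i)) * Yaux τ σ a b i m)

lemma coreA (τ σ : Equiv.Perm (Fin n)) (a b : Fin n → A) (i : Fin n) (m : ℕ) :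
    cycProd τ (fun j => a (τ j) * b (σ j)) i m = Yaux τ σ a b i m * b (σ i) := by
  induction m with
  | zero => rfl
  | succ m ih =>
      show a (τ ((τ ^ (m+1)) i)) * b (σ ((τ ^ (m+1)) i)) * cycProd τ _ i m = _
      rw [ih]
      show _ = a ((τ ^ (m+2)) i) * (b (σ ((τ ^ (m+1)) i)) * Yaux τ σ a b i m) * b (σ i)
      have : τ ((τ ^ (m+1)) i) = (τ ^ (m+2)) i := by
        rw [← Equiv.Perm.mul_apply, ← pow_succ']
      rw [this, mul_assoc, mul_assoc, mul_assoc]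

lemma coreB (τ ρ σ π : Equiv.Perm (Fin n)) (hρσ : ρ * σ = σ * τ) (hπσ : π * σ = τ)
    (a b : Fin n → A) (i : Fin n) (m : ℕ) :
    cycProd ρ (fun j => b (ρ j) * a (π j)) (σ i) m
      = b (σ ((τ ^ (m + 1)) i)) * Yaux τ σ a b i m := by
  have hconj : ∀ (k : ℕ) (x : Fin n), (ρ ^ k) (σ x) = σ ((τ ^ k) x) := by
    intro k x
    have : ρ ^ k * σ = σ * τ ^ k := by
      induction k with
      | zero => simp
      | succ k ihk =>
          rw [pow_succ', pow_succ', mul_assoc, ihk, ← mul_assoc, hρσ, mul_assoc]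
    rw [← Equiv.Perm.mul_apply, this, Equiv.Perm.mul_apply]
  have hπ : ∀ x : Fin n, π (σ x) = τ x := by
    intro x; rw [← Equiv.Perm.mul_apply, hπσ]
  induction m with
  | zero =>
      show b (ρ (σ i)) * a (π (σ i)) = b (σ ((τ ^ 1) i)) * a (τ i)
      rw [← pow_one ρ, hconj 1 i, hπ, pow_one]
  | succ m ih =>
      show b (ρ ((ρ ^ (m+1)) (σ i))) * a (π ((ρ ^ (m+1)) (σ i))) * cycProd ρ _ (σ i) m = _
      rw [ih, hconj (m+1) i, hπ]
      have h1 : τ ((τ ^ (m+1)) i) = (τ ^ (m+2)) i := by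
        rw [← Equiv.Perm.mul_apply, ← pow_succ']
      have h2 : ρ (σ ((τ ^ (m+1)) i)) = σ ((τ ^ (m+2)) i) := by
        rw [← Equiv.Perm.mul_apply, hρσ, Equiv.Perm.mul_apply, h1]
      rw [h1, h2]
      show _ = b (σ ((τ ^ (m+2)) i)) *
        (a ((τ ^ (m+2)) i) * (b (σ ((τ ^ (m+1)) i)) * Yaux τ σ a b i m))
      rw [mul_assoc]

variable {R : Type*} [CommRing R] [Algebra R A]

lemma tr_cycProd_rot (tr : A →ₗ[R] R) (htr : ∀ a b : A, tr (a * b) = tr (b * a))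
    (π : Equiv.Perm (Fin n)) (d : Fin n → A) {i : Fin n} {m : ℕ}
    (h : (π ^ (m + 1)) i = i) :
    tr (cycProd π d (π i) m) = tr (cycProd π d i m) := by
  cases m with
  | zero =>
      have : π i = i := by simpa using h
      rw [this]
  | succ m =>
      rw [cycProd_shift]
      have hL : cycProd π (fun j => d (π j)) i (m + 1)
          = d i * cycProd π (fun j => d (π j)) i m := by
        have hp : π ((π ^ (m+1)) i) = i := by
          rw [← Equiv.Perm.mul_apply, ← pow_succ']
          exact h
        show d (π ((π ^ (m+1)) i)) * cycProd π (fun j => d (π j)) i m = _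
        rw [hp]
      rw [hL, cycProd_succ, htr]

lemma tr_cycProd_rot_pow (tr : A →ₗ[R] R) (htr : ∀ a b : A, tr (a * b) = tr (b * a))
    (π : Equiv.Perm (Fin n)) (d : Fin n → A) {i : Fin n} {m : ℕ}
    (h : (π ^ (m + 1)) i = i) (t : ℕ) :
    tr (cycProd π d ((π ^ t) i) m) = tr (cycProd π d i m) := by
  induction t with
  | zero => simp
  | succ t ih =>
      have h1 : (π ^ (t+1)) i = π ((π ^ t) i) := by
        rw [← Equiv.Perm.mul_apply, ← pow_succ']
      have h2 : (π ^ (m + 1)) ((π ^ t) i) = (π ^ t) i := by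
        rw [← Equiv.Perm.mul_apply, pow_mul_comm, Equiv.Perm.mul_apply, h]
      rw [h1, tr_cycProd_rot tr htr π d h2, ih]

lemma star_cycProd (star : A →ₗ[R] A) (hsm : ∀ a b : A, star (a * b) = star b * star a)
    (π : Equiv.Perm (Fin n)) (b : Fin n → A) (i : Fin n) (m : ℕ) :
    star (cycProd π b i m) = rProd π (fun j => star (b j)) i m := by
  induction m with
  | zero => rfl
  | succ m ih =>
      show star (b ((π ^ (m+1)) i) * cycProd π b i m) = _
      rw [hsm, ih]
      rfl

end AuxStmt17

section Comb
variable {n : ℕ} {A : Type*} [Ring A] {R : Type*} [CommRing R] [Algebra R A]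

lemma comb_main (tr : A →ₗ[R] R) (htr : ∀ a b : A, tr (a * b) = tr (b * a))
    (p s : Equiv.Perm (Fin n)) (a b : Fin n → A) :
    ∏ i ∈ Finset.univ.filter (fun i : Fin n => ∀ k : ℕ, i ≤ ((p * s) ^ k) i),
      tr (cycProd (p * s) (fun j => a ((p * s) j) * b (s j)) i
        (((p * s).cycleOf i).support.card - 1))
    = ∏ i ∈ Finset.univ.filter (fun i : Fin n => ∀ k : ℕ, i ≤ ((s * p) ^ k) i),
      tr (cycProd (s * p) (fun j => b ((s * p) j) * a (p j)) i
        (((s * p).cycleOf i).support.card - 1)) := by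
  have hρσ : (s * p) * s = s * (p * s) := by group
  have hτσ' : (p * s) * s⁻¹ = s⁻¹ * (s * p) := by group
  apply Finset.prod_nbij' (fun i => minRep (s * p) (s i)) (fun j => minRep (p * s) (s⁻¹ j))
  · intro i _
    simp only [Finset.mem_filter, Finset.mem_univ, true_and]
    exact fun k => minRep_min (s * p) (s i) k
  · intro j _
    simp only [Finset.mem_filter, Finset.mem_univ, true_and]
    exact fun k => minRep_min (p * s) (s⁻¹ j) k
  · intro i hi
    simp only [Finset.mem_filter, Finset.mem_univ, true_and] at hi
    have h1 := minRep_sameCycle (s * p) (s i)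
    have h2 := sameCycle_of_conj hτσ' h1
    rw [perm_inv_apply_self'] at h2
    rw [← minRep_congr (p * s) h2]
    exact minRep_eq_self (p * s) hi
  · intro j hj
    simp only [Finset.mem_filter, Finset.mem_univ, true_and] at hj
    have h1 := minRep_sameCycle (p * s) (s⁻¹ j)
    have h2 := sameCycle_of_conj hρσ h1
    rw [perm_apply_inv_self'] at h2
    rw [← minRep_congr (s * p) h2]
    exact minRep_eq_self (s * p) hj
  · intro i hi
    simp only [Finset.mem_filter, Finset.mem_univ, true_and] at hi
    -- first: move the evaluation point from `minRep (s*p) (s i)` to `s i`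
    obtain ⟨t, ht⟩ := sameCycle_nat (s * p) (minRep_sameCycle (s * p) (s i))
    have hgrot : tr (cycProd (s * p) (fun j => b ((s * p) j) * a (p j)) (minRep (s * p) (s i))
        (((s * p).cycleOf (minRep (s * p) (s i))).support.card - 1))
        = tr (cycProd (s * p) (fun j => b ((s * p) j) * a (p j)) (s i)
        (((s * p).cycleOf (s i)).support.card - 1)) := by
      rw [← ht, Equiv.Perm.cycleOf_self_apply_pow]
      exact tr_cycProd_rot_pow tr htr (s * p) _ (key_pow (s * p) (s i)) t
    rw [hgrot]
    -- conjugation: the two cycle lengths agree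
    have hρconj : s * p = s * (p * s) * s⁻¹ := by group
    have hcard : (((s * p).cycleOf (s i)).support.card) = ((p * s).cycleOf i).support.card := by
      rw [hρconj]
      exact card_cycleOf_conj (p * s) s i
    rw [hcard]
    -- core computation
    have hfix : ((p * s) ^ (((p * s).cycleOf i).support.card - 1 + 1)) i = i :=
      key_pow (p * s) i
    have hA := coreA (p * s) s a b i (((p * s).cycleOf i).support.card - 1)
    have hB := coreB (p * s) (s * p) s p hρσ rfl a b i (((p * s).cycleOf i).support.card - 1)
    rw [hfix] at hB
    rw [hA, hB, htr]
end Comb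
theorem stmt_17 {R : Type*} [CommRing R] {A : Type*} [Ring A] [Algebra R A]
    (star : A →ₗ[R] A) (hsm : ∀ a b : A, star (a * b) = star b * star a)
    (hss : ∀ a : A, star (star a) = a)
    (tr : A →ₗ[R] R) (htr : ∀ a b : A, tr (a * b) = tr (b * a))
    (htrs : ∀ a : A, tr (star a) = tr a)
    (δ₀ : R) (htr1 : tr 1 = δ₀)
    (n : ℕ) (W : Type*) [Ring W] [Algebra R W]
    (φ : ((⨂[R] _ : Fin n, A) ⊗[R] (Equiv.Perm (Fin n) →₀ R)) ≃ₗ[R] W)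
    -- `wm a π` denotes the element `(a₁ ⊗ ⋯ ⊗ aₙ) π` of the wreath product
    (wm : (Fin n → A) → Equiv.Perm (Fin n) → W)
    (hwm : ∀ (a : Fin n → A) (π : Equiv.Perm (Fin n)),
      wm a π = φ ((PiTensorProduct.tprod R a) ⊗ₜ[R] Finsupp.single π (1 : R)))
    (hone : wm (fun _ => 1) 1 = 1)
    (hmul : ∀ (a b : Fin n → A) (π σ : Equiv.Perm (Fin n)),
      wm a π * wm b σ = wm (fun i => a i * b (π⁻¹ i)) (π * σ))
    (starW : W →ₗ[R] W)
    (hstarW : ∀ (a : Fin n → A) (π : Equiv.Perm (Fin n)),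
      starW (wm a π) = wm (fun i => star (a (π i))) π⁻¹)
    (Tr : W →ₗ[R] R)
    (hTr : ∀ (π : Equiv.Perm (Fin n)) (a : Fin n → A),
      Tr (wm (fun i => a (π⁻¹ i)) π) =
        ∏ i ∈ Finset.univ.filter (fun i : Fin n => ∀ k : ℕ, i ≤ (π ^ k) i),
          tr (cycProd π a i ((π.cycleOf i).support.card - 1))) :
    (∀ x y : W, Tr (x * y) = Tr (y * x)) ∧ (∀ x : W, Tr (starW x) = Tr x) ∧
      Tr 1 = δ₀ ^ n := by
  classical
  -- reformulated trace formula
  have hTr' : ∀ (b : Fin n → A) (p : Equiv.Perm (Fin n)), Tr (wm b p) =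
      ∏ i ∈ Finset.univ.filter (fun i : Fin n => ∀ k : ℕ, i ≤ (p ^ k) i),
        tr (cycProd p (fun j => b (p j)) i ((p.cycleOf i).support.card - 1)) := by
    intro b p
    have h := hTr p (fun j => b (p j))
    simp only [perm_apply_inv_self'] at h
    exact h
  -- spanning of pure elements
  have hspan : Submodule.span R {w : W | ∃ a p, w = wm a p} = ⊤ := by
    have h1 : Submodule.span R
        (Set.range (PiTensorProduct.tprod R (s := fun _ : Fin n => A))) = ⊤ :=
      PiTensorProduct.span_tprod_eq_top
    have h2 : Submodule.span R
        (Set.range (fun p : Equiv.Perm (Fin n) => Finsupp.single p (1 : R))) = ⊤ := by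
      have hb := (Finsupp.basisSingleOne (ι := Equiv.Perm (Fin n)) (R := R)).span_eq
      have hco : ⇑(Finsupp.basisSingleOne (ι := Equiv.Perm (Fin n)) (R := R))
          = fun p => Finsupp.single p (1 : R) := by
        funext p; simp
      rw [hco] at hb
      exact hb
    have h3 := Submodule.map₂_span_span R
      (TensorProduct.mk R (⨂[R] _ : Fin n, A) (Equiv.Perm (Fin n) →₀ R))
      (Set.range (PiTensorProduct.tprod R (s := fun _ : Fin n => A)))
      (Set.range (fun p : Equiv.Perm (Fin n) => Finsupp.single p (1 : R)))
    rw [h1, h2, TensorProduct.map₂_mk_top_top_eq_top] at h3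
    have h4 : Submodule.span R (⇑φ.toLinearMap ''
        (Set.image2 (fun m' n' => (TensorProduct.mk R _ _) m' n')
          (Set.range (PiTensorProduct.tprod R (s := fun _ : Fin n => A)))
          (Set.range (fun p : Equiv.Perm (Fin n) => Finsupp.single p (1 : R))))) = ⊤ := by
      rw [Submodule.span_image, ← h3, Submodule.map_top, LinearEquiv.range]
    refine top_unique ?_
    rw [← h4]
    refine Submodule.span_mono ?_
    rintro w ⟨x, hx, rfl⟩
    obtain ⟨u, ⟨af, rfl⟩, v, ⟨pf, rfl⟩, rfl⟩ := hx
    exact ⟨af, pf, by rw [hwm]; rfl⟩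
  refine ⟨?_, ?_, ?_⟩
  · -- trace property
    have hkey : ∀ (a' b' : Fin n → A) (p s : Equiv.Perm (Fin n)),
        Tr (wm a' p * wm b' s) = Tr (wm b' s * wm a' p) := by
      intro a' b' p s
      have e1 : Tr (wm a' p * wm b' s) =
          ∏ i ∈ Finset.univ.filter (fun i : Fin n => ∀ k : ℕ, i ≤ ((p * s) ^ k) i),
            tr (cycProd (p * s) (fun j => a' ((p * s) j) * b' (s j)) i
              (((p * s).cycleOf i).support.card - 1)) := by
        rw [hmul, hTr']
        apply Finset.prod_congr rfl
        intro i _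
        have hf : (fun j => (fun i0 => a' i0 * b' (p⁻¹ i0)) ((p * s) j))
            = (fun j => a' ((p * s) j) * b' (s j)) := by
          funext j
          show a' ((p * s) j) * b' (p⁻¹ ((p * s) j)) = _
          rw [← Equiv.Perm.mul_apply, inv_mul_cancel_left]
        rw [hf]
      have e2 : Tr (wm b' s * wm a' p) =
          ∏ i ∈ Finset.univ.filter (fun i : Fin n => ∀ k : ℕ, i ≤ ((s * p) ^ k) i),
            tr (cycProd (s * p) (fun j => b' ((s * p) j) * a' (p j)) i
              (((s * p).cycleOf i).support.card - 1)) := by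
        rw [hmul, hTr']
        apply Finset.prod_congr rfl
        intro i _
        have hf : (fun j => (fun i0 => b' i0 * a' (s⁻¹ i0)) ((s * p) j))
            = (fun j => b' ((s * p) j) * a' (p j)) := by
          funext j
          show b' ((s * p) j) * a' (s⁻¹ ((s * p) j)) = _
          rw [← Equiv.Perm.mul_apply, inv_mul_cancel_left]
        rw [hf]
      rw [e1, e2]
      exact comb_main tr htr p s a' b'
    -- lift by linearity
    have hB : ((LinearMap.mul R W).compr₂ Tr) = ((LinearMap.mul R W).flip.compr₂ Tr) := by
      apply LinearMap.ext_on hspan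
      rintro x ⟨a', p, rfl⟩
      apply LinearMap.ext_on hspan
      rintro y ⟨b', s, rfl⟩
      simp only [LinearMap.compr₂_apply, LinearMap.mul_apply', LinearMap.flip_apply]
      exact hkey a' b' p s
    intro x y
    have := LinearMap.congr_fun (LinearMap.congr_fun hB x) y
    simpa using this
  · -- star invariance
    have hdir : ∀ (q : Equiv.Perm (Fin n)) (i : Fin n),
        (∀ k : ℕ, i ≤ (q ^ k) i) → ∀ k : ℕ, i ≤ (q⁻¹ ^ k) i := by
      intro q i h k
      have hq : q⁻¹ = q ^ (orderOf q - 1) := by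
        have hpos : 0 < orderOf q := orderOf_pos q
        have hmul1 : q * q ^ (orderOf q - 1) = 1 := by
          rw [← pow_succ', Nat.sub_add_cancel hpos]
          exact pow_orderOf_eq_one q
        exact inv_eq_of_mul_eq_one_right hmul1
      rw [hq, ← pow_mul]
      exact h _
    have hMinv : ∀ p : Equiv.Perm (Fin n),
        Finset.univ.filter (fun i : Fin n => ∀ k : ℕ, i ≤ (p⁻¹ ^ k) i)
          = Finset.univ.filter (fun i : Fin n => ∀ k : ℕ, i ≤ (p ^ k) i) := by
      intro p
      ext i
      simp only [Finset.mem_filter, Finset.mem_univ, true_and]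
      constructor
      · intro h
        have := hdir p⁻¹ i h
        rwa [inv_inv] at this
      · intro h
        exact hdir p i h
    have hpure : ∀ (a : Fin n → A) (p : Equiv.Perm (Fin n)),
        Tr (starW (wm a p)) = Tr (wm a p) := by
      intro a p
      rw [hstarW, hTr', hTr']
      simp only [perm_apply_inv_self']
      rw [hMinv p]
      apply Finset.prod_congr rfl
      intro i _
      rw [card_support_cycleOf_inv p i]
      set m := (p.cycleOf i).support.card - 1 with hmdef
      have hfix : (p ^ (m + 1)) i = i := key_pow p i
      have hstarC := star_cycProd star hsm p⁻¹ (fun j => star (a j)) i m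
      have hss' : (fun j => star ((fun j' => star (a j')) j)) = a := by
        funext j; exact hss (a j)
      rw [hss'] at hstarC
      have h2 : rProd p⁻¹ a i m = cycProd p (fun j => a (p j)) i m := by
        have hr := rProd_inv_eq p a i m
        rwa [hfix] at hr
      calc tr (cycProd p⁻¹ (fun j => star (a j)) i m)
          = tr (star (cycProd p⁻¹ (fun j => star (a j)) i m)) := (htrs _).symm
        _ = tr (rProd p⁻¹ a i m) := by rw [hstarC]
        _ = tr (cycProd p (fun j => a (p j)) i m) := by rw [h2]
    have hcomp : Tr.comp starW = Tr := by
      apply LinearMap.ext_on hspan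
      rintro w ⟨a, p, rfl⟩
      simpa using hpure a p
    intro x
    have := LinearMap.congr_fun hcomp x
    simpa using this
  · -- Tr 1 = δ₀ ^ n
    rw [← hone, hTr']
    have hfil : Finset.univ.filter
        (fun i : Fin n => ∀ k : ℕ, i ≤ ((1 : Equiv.Perm (Fin n)) ^ k) i)
        = Finset.univ := by
      ext i; simp
    rw [hfil]
    have hval : ∀ i : Fin n, tr (cycProd (1 : Equiv.Perm (Fin n))
        (fun j => (fun _ : Fin n => (1 : A)) ((1 : Equiv.Perm (Fin n)) j)) i
        (((1 : Equiv.Perm (Fin n)).cycleOf i).support.card - 1)) = δ₀ := by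
      intro i
      have hc : ((1 : Equiv.Perm (Fin n)).cycleOf i).support.card = 0 := by
        rw [Equiv.Perm.cycleOf_one]; simp
      rw [hc]
      exact htr1
    rw [Finset.prod_congr rfl (fun i _ => hval i), Finset.prod_const]
    simp
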